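/- If n > 3, n ≠ 6, and n is not prime, then 2^n − 1 is not a prime power. -/

import Mathlib

lemma aux_ineq (q k : ℕ) (hq : 2 ≤ q) (hk : 2 ≤ k) :
    (2 ^ q - 1) * k < 2 ^ (q * k) - 1 := by
  have h1 : k ≤ 2 ^ (k - 1) := by
    have := Nat.lt_two_pow_self (n := k - 1)
    omega
  have h2 : 2 ^ (k - 1) ≤ 2 ^ (q * (k - 1)) := Nat.pow_le_pow_right (by norm_num) (Nat.le_mul_of_pos_left _ (by omega))
  have h3 : 2 ^ q * k ≤ 2 ^ (q * k) := by
    calc 2 ^ q * k ≤ 2 ^ q * 2 ^ (q * (k - 1)) := Nat.mul_le_mul_left _ (h1.trans h2)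
    _ = 2 ^ (q + q * (k - 1)) := (pow_add 2 _ _).symm
    _ = 2 ^ (q * k) := by
        congr 1
        obtain ⟨k', rfl⟩ : ∃ k', k = k' + 1 := ⟨k - 1, by omega⟩
        simp [Nat.mul_succ, Nat.mul_add]
        ring
  have h4 : 1 ≤ 2 ^ q := Nat.one_le_two_pow
  have h5 : (2 ^ q - 1) * k + k = 2 ^ q * k := by
    obtain ⟨t, ht⟩ := Nat.exists_eq_add_of_le h4
    rw [ht, Nat.add_sub_cancel_left]
    ring
  omega

theorem two_pow_sub_one_not_primePow (n : ℕ) (h3 : 3 < n) (h6 : n ≠ 6)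
    (hnp : ¬ n.Prime) : ¬ IsPrimePow (2 ^ n - 1) := by
  rintro ⟨p, m, hp, hm, heq⟩
  rw [Nat.prime_iff.symm] at hp
  set q := n.minFac with hqdef
  have hq : q.Prime := Nat.minFac_prime (by omega)
  have hqd : q ∣ n := Nat.minFac_dvd n
  have hq2 : 2 ≤ q := hq.two_le
  have hqsq : q ^ 2 ≤ n := Nat.minFac_sq_le_self (by omega) hnp
  set k := n / q with hkdef
  have hn : n = q * k := (Nat.div_mul_cancel hqd).symm.trans (mul_comm _ _)
  have hk2 : 2 ≤ k := by
    rcases Nat.lt_or_ge k 2 with h | h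
    · interval_cases k
      · simp at hn; omega
      · rw [mul_one] at hn; exact absurd (hn ▸ hq) hnp
    · exact h
  -- p divides 2^q - 1
  have hdq : (2 : ℕ) ^ q - 1 ∣ 2 ^ n - 1 := by
    rw [hn, pow_mul]
    simpa using Nat.sub_dvd_pow_sub_pow (2 ^ q) 1 k
  have hq1 : 1 < 2 ^ q - 1 := by
    have : 2 ^ 2 ≤ 2 ^ q := Nat.pow_le_pow_right (by norm_num) hq2
    omega
  have hpd : p ∣ 2 ^ q - 1 := by
    rw [← heq] at hdq
    obtain ⟨i, hi, hieq⟩ := (Nat.dvd_prime_pow hp).mp hdq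
    rcases Nat.eq_zero_or_pos i with h0 | h0
    · simp [h0] at hieq; omega
    · exact hieq ▸ dvd_pow_self p (by omega)
  have hpodd : Odd p := by
    have : p ≠ 2 := by
      rintro rfl
      have : (2 : ℕ) ∣ 2 ^ q - 1 := hpd
      have h2 : 2 ^ 2 ≤ 2 ^ q := Nat.pow_le_pow_right (by norm_num) hq2
      have : 2 ∣ 2 ^ q := dvd_pow_self 2 (by omega)
      omega
    exact hp.odd_of_ne_two this
  have hpnd : ¬ p ∣ 2 ^ q := by
    intro h
    have := hp.dvd_of_dvd_pow h
    have := Nat.le_of_dvd (by norm_num) this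
    rcases hpodd with ⟨t, ht⟩
    have := hp.two_le
    omega
  haveI : Fact p.Prime := ⟨hp⟩
  have hlte := padicValNat.pow_sub_pow (p := p) hpodd (x := 2 ^ q) (y := 1)
    (Nat.one_lt_pow (by omega) (by norm_num))
    (by simpa using hpd) hpnd (n := k) (by omega)
  rw [one_pow, ← pow_mul, ← hn] at hlte
  have hm' : padicValNat p (2 ^ n - 1) = m := by
    rw [← heq]; exact padicValNat.prime_pow m
  rw [hm'] at hlte
  -- now bound
  have hv1 : p ^ padicValNat p (2 ^ q - 1) ∣ 2 ^ q - 1 := pow_padicValNat_dvd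
  have hv2 : p ^ padicValNat p k ∣ k := pow_padicValNat_dvd
  have hle1 : p ^ padicValNat p (2 ^ q - 1) ≤ 2 ^ q - 1 := Nat.le_of_dvd (by omega) hv1
  have hle2 : p ^ padicValNat p k ≤ k := Nat.le_of_dvd (by omega) hv2
  have : 2 ^ n - 1 = p ^ padicValNat p (2 ^ q - 1) * p ^ padicValNat p k := by
    rw [← pow_add, ← hlte, heq]
  have hbig : 2 ^ n - 1 ≤ (2 ^ q - 1) * k := by
    rw [this]; exact Nat.mul_le_mul hle1 hle2
  have := aux_ineq q k hq2 hk2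
  rw [← hn] at this
  omega
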